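/- Let a < b, let f : [a,b] → ℝ be càdlàg on [a,b], and let c > 0. Define g : [a,b] → ℝ by g(a) := f(a) and g(s) := f(a) + UTV^c(f,[a,s]) − DTV^c(f,[a,s]) for s ∈ (a,b]. Then (i) |(g(s) − g(u)) − (f(s) − f(u))| ≤ c for all a ≤ u ≤ s ≤ b, and (ii) TV(g,[a,s]) = TV^c(f,[a,s]) for every s ∈ (a,b]. -/

import Mathlib

open Set Filter Topology ENNReal

noncomputable def truncVar (f : ℝ → ℝ) (a b c : ℝ) : ℝ≥0∞ :=
  ⨆ (n : ℕ) (t : ℕ → ℝ) (_ : a ≤ t 0) (_ : ∀ i < n, t i < t (i + 1)) (_ : t n ≤ b),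
    ∑ i ∈ Finset.range n, ENNReal.ofReal (max (|f (t (i + 1)) - f (t i)| - c) 0)

noncomputable def totalVar (f : ℝ → ℝ) (a b : ℝ) : ℝ≥0∞ := truncVar f a b 0

noncomputable def upTruncVar (f : ℝ → ℝ) (a b c : ℝ) : ℝ≥0∞ :=
  ⨆ (n : ℕ) (t : ℕ → ℝ) (_ : a ≤ t 0) (_ : ∀ i < n, t i < t (i + 1)) (_ : t n ≤ b),
    ∑ i ∈ Finset.range n, ENNReal.ofReal (max (f (t (i + 1)) - f (t i) - c) 0)

noncomputable def downTruncVar (f : ℝ → ℝ) (a b c : ℝ) : ℝ≥0∞ :=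
  ⨆ (n : ℕ) (t : ℕ → ℝ) (_ : a ≤ t 0) (_ : ∀ i < n, t i < t (i + 1)) (_ : t n ≤ b),
    ∑ i ∈ Finset.range n, ENNReal.ofReal (max (f (t i) - f (t (i + 1)) - c) 0)

def CadlagOn (f : ℝ → ℝ) (a b : ℝ) : Prop :=
  (∀ x ∈ Set.Ico a b, Filter.Tendsto f (𝓝[>] x) (𝓝 (f x))) ∧
  (∀ x ∈ Set.Ioc a b, ∃ L : ℝ, Filter.Tendsto f (𝓝[<] x) (𝓝 L))

namespace TVaux

def pw (f : ℝ → ℝ) (c : ℝ) (p q : ℝ) : ℝ := max (|f q - f p| - c) 0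
def uw (f : ℝ → ℝ) (c : ℝ) (p q : ℝ) : ℝ := max (f q - f p - c) 0
def dw (f : ℝ → ℝ) (c : ℝ) (p q : ℝ) : ℝ := max (f p - f q - c) 0

lemma pw_nonneg (f : ℝ → ℝ) (c p q : ℝ) : 0 ≤ pw f c p q := le_max_right _ _
lemma uw_nonneg (f : ℝ → ℝ) (c p q : ℝ) : 0 ≤ uw f c p q := le_max_right _ _
lemma dw_nonneg (f : ℝ → ℝ) (c p q : ℝ) : 0 ≤ dw f c p q := le_max_right _ _


def sumW (w : ℝ → ℝ → ℝ) : List ℝ → ℝ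
  | p :: q :: l => w p q + sumW w (q :: l)
  | _ => 0

lemma sumW_nil (w : ℝ → ℝ → ℝ) : sumW w [] = 0 := rfl
lemma sumW_single (w : ℝ → ℝ → ℝ) (x : ℝ) : sumW w [x] = 0 := rfl
lemma sumW_cons₂ (w : ℝ → ℝ → ℝ) (p q : ℝ) (l : List ℝ) :
    sumW w (p :: q :: l) = w p q + sumW w (q :: l) := rfl

lemma sumW_nonneg (w : ℝ → ℝ → ℝ) (hw : ∀ p q, 0 ≤ w p q) :
    ∀ l : List ℝ, 0 ≤ sumW w l := by
  intro l
  induction l with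
  | nil => simp [sumW]
  | cons x l ih =>
    cases l with
    | nil => simp [sumW]
    | cons y l' => simpa [sumW] using add_nonneg (hw x y) ih

lemma sumW_cons_le (w : ℝ → ℝ → ℝ) (hw : ∀ p q, 0 ≤ w p q) (x : ℝ) (l : List ℝ) :
    sumW w l ≤ sumW w (x :: l) := by
  cases l with
  | nil => simp [sumW]
  | cons y l' => rw [sumW]; exact le_add_of_nonneg_left (hw x y)

lemma sumW_append (w : ℝ → ℝ → ℝ) :
    ∀ (X : List ℝ) (hX : X ≠ []) (Y : List ℝ) (hY : Y ≠ []),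
      sumW w (X ++ Y) = sumW w X + w (X.getLast hX) (Y.head hY) + sumW w Y := by
  intro X
  induction X with
  | nil => intro h; exact absurd rfl h
  | cons x l ih =>
    intro _ Y hY
    cases l with
    | nil =>
      cases Y with
      | nil => exact absurd rfl hY
      | cons y Y' => simp [sumW]
    | cons x' l' =>
      have := ih (by simp) Y hY
      simp only [List.cons_append] at *
      rw [sumW, this, sumW]
      simp [List.getLast_cons]
      ring

lemma sumW_append_ge (w : ℝ → ℝ → ℝ) (hw : ∀ p q, 0 ≤ w p q) (X Y : List ℝ) :
    sumW w X + sumW w Y ≤ sumW w (X ++ Y) := by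
  rcases eq_or_ne X [] with rfl | hX
  · simp [sumW]
  rcases eq_or_ne Y [] with rfl | hY
  · simp [sumW]
  rw [sumW_append w X hX Y hY]
  have := hw (X.getLast hX) (Y.head hY); linarith

lemma sumW_map_range (w : ℝ → ℝ → ℝ) (t : ℕ → ℝ) :
    ∀ n, sumW w ((List.range (n+1)).map t) = ∑ i ∈ Finset.range n, w (t i) (t (i+1)) := by
  intro n
  induction n with
  | zero => simp [sumW, List.range_succ]
  | succ n ih =>
    rw [Finset.sum_range_succ, ← ih]
    have h1 : (List.range (n+1+1)).map t = (List.range (n+1)).map t ++ [t (n+1)] := by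
      rw [List.range_succ]; simp
    have hne : (List.range (n+1)).map t ≠ [] := by simp [List.range_succ]
    have hlast : ((List.range (n+1)).map t).getLast hne = t n := by
      rw [List.getLast_eq_getElem]
      simp
    rw [h1, sumW_append w _ hne [t (n+1)] (by simp), hlast]
    simp [sumW]

lemma sorted_head_le {l : List ℝ} (hl : l.Pairwise (· < ·)) (hne : l ≠ []) {x : ℝ}
    (hx : x ∈ l) : l.head hne ≤ x := by
  cases l with
  | nil => exact absurd rfl hne
  | cons y l' =>
    rcases List.mem_cons.1 hx with rfl | h
    · simp
    · exact le_of_lt ((List.pairwise_cons.1 hl).1 x h)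

lemma sorted_le_getLast {l : List ℝ} (hl : l.Pairwise (· < ·)) (hne : l ≠ []) {x : ℝ}
    (hx : x ∈ l) : x ≤ l.getLast hne := by
  induction l with
  | nil => exact absurd rfl hne
  | cons y l' ih =>
    cases l' with
    | nil => simp_all
    | cons z l'' =>
      rw [List.getLast_cons (by simp)]
      rcases List.mem_cons.1 hx with rfl | h
      · exact le_of_lt ((List.pairwise_cons.1 hl).1 _ (List.getLast_mem _))
      · exact ih (List.pairwise_cons.1 hl).2 (by simp) h

lemma strictMono_of_lt {t : ℕ → ℝ} {n : ℕ} (h : ∀ i < n, t i < t (i + 1)) :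
    ∀ i j, i < j → j ≤ n → t i < t j := by
  intro i j hij hjn
  induction j with
  | zero => omega
  | succ j ih =>
    rcases Nat.lt_succ_iff_lt_or_eq.1 hij with h' | rfl
    · exact (ih h' (by omega)).trans (h j (by omega))
    · exact h i (by omega)

noncomputable def genVar (w : ℝ → ℝ → ℝ) (a b : ℝ) : ℝ≥0∞ :=
  ⨆ (n : ℕ) (t : ℕ → ℝ) (_ : a ≤ t 0) (_ : ∀ i < n, t i < t (i + 1)) (_ : t n ≤ b),
    ∑ i ∈ Finset.range n, ENNReal.ofReal (w (t i) (t (i + 1)))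

lemma sum_le_genVar (w : ℝ → ℝ → ℝ) {a b : ℝ} (n : ℕ) (t : ℕ → ℝ) (h1 : a ≤ t 0)
    (h2 : ∀ i < n, t i < t (i + 1)) (h3 : t n ≤ b) :
    ∑ i ∈ Finset.range n, ENNReal.ofReal (w (t i) (t (i + 1))) ≤ genVar w a b := by
  refine le_iSup_of_le n (le_iSup_of_le t ?_)
  rw [iSup_pos h1, iSup_pos h2, iSup_pos h3]

lemma ofReal_sumW (w : ℝ → ℝ → ℝ) (hw : ∀ p q, 0 ≤ w p q) (t : ℕ → ℝ) (n : ℕ) :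
    ENNReal.ofReal (sumW w ((List.range (n+1)).map t)) =
      ∑ i ∈ Finset.range n, ENNReal.ofReal (w (t i) (t (i + 1))) := by
  rw [sumW_map_range, ENNReal.ofReal_sum_of_nonneg (fun i _ => hw _ _)]

lemma le_genVar (w : ℝ → ℝ → ℝ) (hw : ∀ p q, 0 ≤ w p q) {a b : ℝ} {L : List ℝ}
    (hs : L.Pairwise (· < ·)) (hmem : ∀ x ∈ L, a ≤ x ∧ x ≤ b) :
    ENNReal.ofReal (sumW w L) ≤ genVar w a b := by
  cases L with
  | nil => simp [sumW]
  | cons x l =>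
    set L := x :: l with hL
    have hne : L ≠ [] := by simp [hL]
    set n := L.length - 1 with hn
    set t : ℕ → ℝ := fun i => L.getD i 0 with ht
    have hlen : L.length = n + 1 := by simp [hn, hL]
    have hget : ∀ i (hi : i < L.length), t i = L.get ⟨i, hi⟩ := by
      intro i hi
      show L.getD i 0 = _
      rw [List.getD_eq_getElem _ _ hi]
      simp
    have hLt : L = (List.range (n+1)).map t := by
      apply List.ext_get
      · simp [hlen]
      · intro i h1 h2
        simp only [List.get_eq_getElem, List.getElem_map, List.getElem_range]
        exact (hget i (by omega)).symm
    have hmono : ∀ i < n, t i < t (i+1) := by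
      intro i hi
      rw [hget i (by omega), hget (i+1) (by omega)]
      exact (List.sortedLT_iff_pairwise.2 hs).strictMono_get (by simp [Fin.lt_def])
    have h1 : a ≤ t 0 := by
      rw [hget 0 (by omega)]
      exact (hmem _ (List.get_mem _ _)).1
    have h3 : t n ≤ b := by
      rw [hget n (by omega)]
      exact (hmem _ (List.get_mem _ _)).2
    rw [hLt, ofReal_sumW w hw t n]
    exact sum_le_genVar w n t h1 hmono h3
lemma sumW_le_toReal (w : ℝ → ℝ → ℝ) (hw : ∀ p q, 0 ≤ w p q) {a b : ℝ} {L : List ℝ}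
    (hs : L.Pairwise (· < ·)) (hmem : ∀ x ∈ L, a ≤ x ∧ x ≤ b) (hfin : genVar w a b ≠ ⊤) :
    sumW w L ≤ (genVar w a b).toReal := by
  have := le_genVar w hw hs hmem
  rw [← ENNReal.ofReal_le_iff_le_toReal hfin] at *
  exact this

lemma genVar_mono_right (w : ℝ → ℝ → ℝ) {a b b' : ℝ} (h : b ≤ b') :
    genVar w a b ≤ genVar w a b' := by
  refine iSup_le fun n => iSup_le fun t => iSup_le fun h1 => iSup_le fun h2 => iSup_le fun h3 => ?_
  exact sum_le_genVar w n t h1 h2 (h3.trans h)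

lemma genVar_mono_w {w w' : ℝ → ℝ → ℝ} (h : ∀ p q, w p q ≤ w' p q) (a b : ℝ) :
    genVar w a b ≤ genVar w' a b := by
  refine iSup_le fun n => iSup_le fun t => iSup_le fun h1 => iSup_le fun h2 => iSup_le fun h3 => ?_
  refine le_trans ?_ (sum_le_genVar w' n t h1 h2 h3)
  exact Finset.sum_le_sum fun i _ => ENNReal.ofReal_le_ofReal (h _ _)

lemma genVar_exists (w : ℝ → ℝ → ℝ) (hw : ∀ p q, 0 ≤ w p q) {a b : ℝ}
    (hfin : genVar w a b ≠ ⊤) {ε : ℝ} (hε : 0 < ε) :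
    ∃ L : List ℝ, L.Pairwise (· < ·) ∧ (∀ x ∈ L, a ≤ x ∧ x ≤ b) ∧
      (genVar w a b).toReal ≤ sumW w L + ε := by
  rcases eq_or_ne (genVar w a b) 0 with h0 | h0
  · exact ⟨[], by simp, by simp, by simp [h0, sumW]; linarith⟩
  have hlt : genVar w a b - ENNReal.ofReal ε < genVar w a b :=
    ENNReal.sub_lt_self hfin h0 (by simp [hε])
  rw [genVar] at hlt
  rw [lt_iSup_iff] at hlt
  obtain ⟨n, hlt⟩ := hlt
  rw [lt_iSup_iff] at hlt
  obtain ⟨t, hlt⟩ := hlt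
  rw [lt_iSup_iff] at hlt
  obtain ⟨h1, hlt⟩ := hlt
  rw [lt_iSup_iff] at hlt
  obtain ⟨h2, hlt⟩ := hlt
  rw [lt_iSup_iff] at hlt
  obtain ⟨h3, hlt⟩ := hlt
  have hsorted : ((List.range (n+1)).map t).Pairwise (· < ·) := by
    rw [List.pairwise_map]
    refine List.pairwise_iff_get.2 fun i j hij => ?_
    simp only [List.get_eq_getElem, List.getElem_range]
    exact strictMono_of_lt h2 _ _ hij (by
      have := j.2; simp [List.length_range] at this; omega)
  have hmono : ∀ i ≤ n, t 0 ≤ t i := by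
    intro i hi
    rcases Nat.eq_zero_or_pos i with rfl | hpos
    · exact le_rfl
    · exact le_of_lt (strictMono_of_lt h2 0 i hpos hi)
  have hmono' : ∀ i ≤ n, t i ≤ t n := by
    intro i hi
    rcases eq_or_lt_of_le hi with rfl | hlt
    · exact le_rfl
    · exact le_of_lt (strictMono_of_lt h2 i n hlt le_rfl)
  refine ⟨(List.range (n+1)).map t, hsorted, ?_, ?_⟩
  · intro x hx
    simp only [List.mem_map, List.mem_range] at hx
    obtain ⟨i, hi, rfl⟩ := hx
    exact ⟨h1.trans (hmono i (by omega)), (hmono' i (by omega)).trans h3⟩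
  · have hsum : ENNReal.ofReal (sumW w ((List.range (n+1)).map t)) =
        ∑ i ∈ Finset.range n, ENNReal.ofReal (w (t i) (t (i + 1))) := ofReal_sumW w hw t n
    have hle : genVar w a b - ENNReal.ofReal ε ≤ ENNReal.ofReal (sumW w ((List.range (n+1)).map t)) := by
      rw [hsum]; exact le_of_lt hlt
    have h4 := ENNReal.toReal_mono (by simp) hle
    rw [ENNReal.toReal_ofReal (sumW_nonneg w hw _)] at h4
    have h5 : (genVar w a b - ENNReal.ofReal ε).toReal ≥ (genVar w a b).toReal - ε := by
      rcases le_total (ENNReal.ofReal ε) (genVar w a b) with hle' | hle'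
      · rw [ENNReal.toReal_sub_of_le hle' hfin, ENNReal.toReal_ofReal (le_of_lt hε)]
      · have : (genVar w a b).toReal ≤ ε := by
          have := ENNReal.toReal_mono (by simp) hle'
          rwa [ENNReal.toReal_ofReal (le_of_lt hε)] at this
        have h6 : (0:ℝ) ≤ (genVar w a b - ENNReal.ofReal ε).toReal := ENNReal.toReal_nonneg
        linarith
    linarith

lemma truncVar_eq (f : ℝ → ℝ) (a b c : ℝ) : truncVar f a b c = genVar (pw f c) a b := rfl
lemma upTruncVar_eq (f : ℝ → ℝ) (a b c : ℝ) : upTruncVar f a b c = genVar (uw f c) a b := rfl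
lemma downTruncVar_eq (f : ℝ → ℝ) (a b c : ℝ) : downTruncVar f a b c = genVar (dw f c) a b := rfl
lemma totalVar_eq (f : ℝ → ℝ) (a b : ℝ) : totalVar f a b = genVar (pw f 0) a b := rfl

/-! ### interval families -/

def rsum (r : ℝ × ℝ → ℝ) (V : List (ℝ × ℝ)) : ℝ := (V.map r).sum

@[simp] lemma rsum_nil (r : ℝ × ℝ → ℝ) : rsum r [] = 0 := rfl
@[simp] lemma rsum_cons (r : ℝ × ℝ → ℝ) (I : ℝ × ℝ) (V : List (ℝ × ℝ)) :
    rsum r (I :: V) = r I + rsum r V := by simp [rsum]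

lemma pw_comm (f : ℝ → ℝ) (c p q : ℝ) : pw f c p q = pw f c q p := by
  simp [pw, abs_sub_comm]

lemma up_le_pw (f : ℝ → ℝ) (c p q : ℝ) : f q - f p - c ≤ pw f c p q :=
  le_max_of_le_left (by have := le_abs_self (f q - f p); linarith)

lemma down_le_pw (f : ℝ → ℝ) (c p q : ℝ) : f p - f q - c ≤ pw f c p q :=
  le_max_of_le_left (by have := neg_abs_le (f q - f p); linarith)

lemma prepend (w : ℝ → ℝ → ℝ) (hw : ∀ p q, 0 ≤ w p q) {p q : ℝ} (hpq : p < q)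
    {Z : List ℝ} (hZ : Z.Pairwise (· < ·)) (hge : ∀ z ∈ Z, q ≤ z) :
    ∃ Z' : List ℝ, Z'.Pairwise (· < ·) ∧ (∀ z ∈ Z', z = p ∨ z = q ∨ z ∈ Z) ∧
      w p q + sumW w Z ≤ sumW w Z' := by
  cases Z with
  | nil =>
    refine ⟨[p, q], ?_, ?_, ?_⟩
    · simp [hpq]
    · intro z hz
      simp only [List.mem_cons, List.not_mem_nil, or_false] at hz
      tauto
    · simp [sumW]
  | cons z rest =>
    rcases eq_or_lt_of_le (hge z (by simp)) with rfl | hqz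
    · refine ⟨p :: q :: rest, ?_, ?_, ?_⟩
      · exact List.pairwise_cons.2 ⟨fun b hb => lt_of_lt_of_le hpq (hge b hb), hZ⟩
      · intro x hx; rcases List.mem_cons.1 hx with rfl | hx
        · exact Or.inl rfl
        · exact Or.inr (Or.inr hx)
      · rw [sumW_cons₂]
    · refine ⟨p :: q :: z :: rest, ?_, ?_, ?_⟩
      · refine List.pairwise_cons.2 ⟨?_, List.pairwise_cons.2 ⟨?_, hZ⟩⟩
        · intro b hb
          rcases List.mem_cons.1 hb with rfl | hb
          · exact hpq
          · exact lt_of_lt_of_le hpq (hge b hb)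
        · intro b hb
          rcases List.mem_cons.1 hb with rfl | hb
          · exact hqz
          · exact lt_of_le_of_lt (hge z (by simp))
              ((List.pairwise_cons.1 hZ).1 b hb)
      · intro x hx
        rcases List.mem_cons.1 hx with rfl | hx
        · exact Or.inl rfl
        rcases List.mem_cons.1 hx with rfl | hx
        · exact Or.inr (Or.inl rfl)
        · exact Or.inr (Or.inr hx)
      · rw [sumW_cons₂, sumW_cons₂]
        have h1 := sumW_cons_le w hw q (z :: rest)
        have h2 := hw q z
        rw [sumW_cons₂] at h1
        have := sumW_nonneg w hw (z :: rest)
        linarith [hw p q]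

lemma flat (f : ℝ → ℝ) (c : ℝ) (r : ℝ × ℝ → ℝ) :
    ∀ (B : List (ℝ × ℝ)), B.Pairwise (fun I J => I.2 ≤ J.1) →
      (∀ I ∈ B, I.1 < I.2) → (∀ I ∈ B, r I ≤ pw f c I.1 I.2) →
      ∃ Z : List ℝ, Z.Pairwise (· < ·) ∧
        (∀ z ∈ Z, ∃ I ∈ B, z = I.1 ∨ z = I.2) ∧ rsum r B ≤ sumW (pw f c) Z := by
  intro B
  induction B with
  | nil => exact fun _ _ _ => ⟨[], by simp, by simp, by simp [sumW]⟩
  | cons I B ih =>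
    intro hp hlt hr
    obtain ⟨Z, hZs, hZm, hZsum⟩ := ih (List.pairwise_cons.1 hp).2
      (fun J hJ => hlt J (by simp [hJ])) (fun J hJ => hr J (by simp [hJ]))
    have hge : ∀ z ∈ Z, I.2 ≤ z := by
      intro z hz
      obtain ⟨J, hJ, hzJ⟩ := hZm z hz
      have h1 : I.2 ≤ J.1 := (List.pairwise_cons.1 hp).1 J hJ
      have h2 : J.1 < J.2 := hlt J (by simp [hJ])
      rcases hzJ with rfl | rfl <;> linarith
    obtain ⟨Z', hZ's, hZ'm, hZ'sum⟩ :=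
      prepend (pw f c) (pw_nonneg f c) (hlt I (by simp)) hZs hge
    refine ⟨Z', hZ's, ?_, ?_⟩
    · intro z hz
      rcases hZ'm z hz with rfl | rfl | hz'
      · exact ⟨I, by simp⟩
      · exact ⟨I, by simp⟩
      · obtain ⟨J, hJ, h⟩ := hZm z hz'
        exact ⟨J, by simp [hJ], h⟩
    · rw [rsum_cons]
      have := hr I (by simp)
      linarith

lemma extract (w : ℝ → ℝ → ℝ) (hw : ∀ p q, 0 ≤ w p q) :
    ∀ (L : List ℝ), L.Pairwise (· < ·) →
      ∃ V : List (ℝ × ℝ), V.Pairwise (fun I J => I.2 ≤ J.1) ∧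
        (∀ I ∈ V, I.1 < I.2 ∧ 0 < w I.1 I.2 ∧ I.1 ∈ L ∧ I.2 ∈ L) ∧
        rsum (fun I => w I.1 I.2) V = sumW w L := by
  intro L
  induction L with
  | nil => exact fun _ => ⟨[], by simp, by simp, by simp [sumW]⟩
  | cons x L ih =>
    intro hs
    cases L with
    | nil => exact ⟨[], by simp, by simp, by simp [sumW]⟩
    | cons y L' =>
      obtain ⟨V, hVp, hVo, hVsum⟩ := ih (List.pairwise_cons.1 hs).2
      by_cases hxy : 0 < w x y
      · refine ⟨(x, y) :: V, ?_, ?_, ?_⟩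
        · refine List.pairwise_cons.2 ⟨?_, hVp⟩
          intro J hJ
          have := (hVo J hJ).2.2.1
          exact sorted_head_le (List.pairwise_cons.1 hs).2 (by simp) this
        · intro I hI
          rcases List.mem_cons.1 hI with rfl | hI
          · exact ⟨(List.pairwise_cons.1 hs).1 y (by simp), hxy, by simp, by simp⟩
          · obtain ⟨h1, h2, h3, h4⟩ := hVo I hI
            exact ⟨h1, h2, by simp [h3], by simp [h4]⟩
        · rw [rsum_cons, sumW_cons₂, hVsum]
      · have : w x y = 0 := le_antisymm (not_lt.1 hxy) (hw x y)
        refine ⟨V, hVp, ?_, ?_⟩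
        · intro I hI
          obtain ⟨h1, h2, h3, h4⟩ := hVo I hI
          exact ⟨h1, h2, by simp [h3], by simp [h4]⟩
        · rw [sumW_cons₂, hVsum, this, zero_add]

lemma endpoint_lb {J : ℝ × ℝ} {B : List (ℝ × ℝ)}
    (hp : (J :: B).Pairwise (fun I K => I.2 ≤ K.1))
    (hlt : ∀ I ∈ J :: B, I.1 < I.2) :
    ∀ I ∈ J :: B, J.1 ≤ I.1 ∧ J.1 ≤ I.2 := by
  intro I hI
  have hJ : J.1 < J.2 := hlt J (by simp)
  rcases List.mem_cons.1 hI with rfl | hI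
  · exact ⟨le_rfl, le_of_lt hJ⟩
  · have h1 : J.2 ≤ I.1 := (List.pairwise_cons.1 hp).1 I hI
    have h2 : I.1 < I.2 := hlt I (by simp [hI])
    exact ⟨by linarith, by linarith⟩

lemma join (w : ℝ → ℝ → ℝ) (hw : ∀ p q, 0 ≤ w p q) {u : ℝ} {X Y : List ℝ}
    (hX : X.Pairwise (· < ·)) (hY : Y.Pairwise (· < ·))
    (hXu : ∀ x ∈ X, x ≤ u) (hYu : ∀ y ∈ Y, u ≤ y) :
    ∃ Z : List ℝ, Z.Pairwise (· < ·) ∧ (∀ z ∈ Z, z ∈ X ∨ z ∈ Y) ∧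
      sumW w X + sumW w Y ≤ sumW w Z := by
  rcases eq_or_ne X [] with rfl | hXne
  · exact ⟨Y, hY, fun z hz => Or.inr hz, by simp [sumW]⟩
  rcases eq_or_ne Y [] with rfl | hYne
  · exact ⟨X, hX, fun z hz => Or.inl hz, by simp [sumW]⟩
  have hx' : X.getLast hXne ≤ u := hXu _ (List.getLast_mem hXne)
  have hy' : u ≤ Y.head hYne := hYu _ (List.head_mem hYne)
  have hcross : ∀ x ∈ X, ∀ y ∈ Y, x ≤ u ∧ u ≤ y := fun x hx y hy => ⟨hXu x hx, hYu y hy⟩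
  rcases eq_or_lt_of_le (hx'.trans hy') with heq | hlt
  · -- getLast X = head Y
    cases Y with
    | nil => exact absurd rfl hYne
    | cons y0 Ytl =>
      have hy0 : X.getLast hXne = y0 := heq
      cases Ytl with
      | nil =>
        exact ⟨X, hX, fun z hz => Or.inl hz, by simp [sumW]⟩
      | cons y1 Ytl' =>
        refine ⟨X ++ y1 :: Ytl', ?_, ?_, ?_⟩
        · rw [List.pairwise_append]
          refine ⟨hX, (List.pairwise_cons.1 hY).2, ?_⟩
          intro x hx z hz
          have h1 : x ≤ X.getLast hXne := sorted_le_getLast hX hXne hx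
          have h2 : y0 < z := (List.pairwise_cons.1 hY).1 z hz
          rw [hy0] at h1; linarith
        · intro z hz
          rcases List.mem_append.1 hz with hz | hz
          · exact Or.inl hz
          · exact Or.inr (by simp [hz])
        · rw [sumW_append w X hXne (y1 :: Ytl') (by simp), hy0]
          rw [sumW_cons₂]
          simp [List.head]
          linarith
  · refine ⟨X ++ Y, ?_, ?_, sumW_append_ge w hw X Y⟩
    · rw [List.pairwise_append]
      refine ⟨hX, hY, ?_⟩
      intro x hx y hy
      have h1 : x ≤ X.getLast hXne := sorted_le_getLast hX hXne hx
      have h2 : Y.head hYne ≤ y := sorted_head_le hY hYne hy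
      linarith
    · intro z hz
      rcases List.mem_append.1 hz with hz | hz
      · exact Or.inl hz
      · exact Or.inr hz

lemma leftpiece (f : ℝ → ℝ) {c : ℝ} (hc : 0 < c) {x y : ℝ} {Z : List ℝ}
    (hZs : Z.Pairwise (· < ·)) (hge : ∀ z ∈ Z, max x y ≤ z) :
    ∃ Z' : List ℝ, Z'.Pairwise (· < ·) ∧ (∀ z ∈ Z', z = x ∨ z = y ∨ z ∈ Z) ∧
      (f y - f x - c) + sumW (pw f c) Z ≤ sumW (pw f c) Z' := by
  rcases lt_trichotomy x y with h | rfl | h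
  · obtain ⟨Z', h1, h2, h3⟩ := prepend (pw f c) (pw_nonneg f c) h hZs
      (fun z hz => le_trans (le_max_right x y) (hge z hz))
    exact ⟨Z', h1, h2, le_trans (by have := up_le_pw f c x y; linarith) h3⟩
  · refine ⟨Z, hZs, fun z hz => Or.inr (Or.inr hz), ?_⟩
    have : f x - f x - c ≤ 0 := by linarith
    linarith
  · obtain ⟨Z', h1, h2, h3⟩ := prepend (pw f c) (pw_nonneg f c) h hZs
      (fun z hz => le_trans (le_max_left x y) (hge z hz))
    refine ⟨Z', h1, fun z hz => by rcases h2 z hz with h' | h' | h' <;> tauto, ?_⟩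
    exact le_trans (by have := down_le_pw f c y x; linarith) h3

lemma merge (f : ℝ → ℝ) {c : ℝ} (hc : 0 < c) :
    ∀ (N : ℕ) (A B : List (ℝ × ℝ)), A.length + B.length ≤ N →
      A.Pairwise (fun I J => I.2 ≤ J.1) → B.Pairwise (fun I J => I.2 ≤ J.1) →
      (∀ I ∈ A, I.1 < I.2) → (∀ I ∈ B, I.1 < I.2) →
      (∀ I ∈ A, c < f I.2 - f I.1) → (∀ I ∈ B, c < f I.1 - f I.2) →
      ∃ Z : List ℝ, Z.Pairwise (· < ·) ∧
        (∀ z ∈ Z, (∃ I ∈ A, z = I.1 ∨ z = I.2) ∨ (∃ I ∈ B, z = I.1 ∨ z = I.2)) ∧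
        rsum (fun I => f I.2 - f I.1 - c) A + rsum (fun I => f I.1 - f I.2 - c) B
          ≤ sumW (pw f c) Z := by
  intro N
  induction N with
  | zero =>
    intro A B hlen _ _ _ _ _ _
    have hA : A = [] := List.length_eq_zero_iff.1 (by omega)
    have hB : B = [] := List.length_eq_zero_iff.1 (by omega)
    subst hA; subst hB
    exact ⟨[], by simp, by simp, by simp [sumW]⟩
  | succ N ih =>
    intro A B hlen hpA hpB hltA hltB hwA hwB
    cases A with
    | nil =>
      obtain ⟨Z, h1, h2, h3⟩ := flat f c _ B hpB hltB
        (fun I _ => down_le_pw f c I.1 I.2)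
      exact ⟨Z, h1, fun z hz => Or.inr (h2 z hz), by simpa using h3⟩
    | cons I A' =>
    cases B with
    | nil =>
      obtain ⟨Z, h1, h2, h3⟩ := flat f c _ (I::A') hpA hltA
        (fun K _ => up_le_pw f c K.1 K.2)
      exact ⟨Z, h1, fun z hz => Or.inl (h2 z hz), by simpa using h3⟩
    | cons J B' =>
      have hIA : I.1 < I.2 := hltA I (by simp)
      have hJB : J.1 < J.2 := hltB J (by simp)
      have hwI : c < f I.2 - f I.1 := hwA I (by simp)
      have hwJ : c < f J.1 - f J.2 := hwB J (by simp)
      have hpA' := (List.pairwise_cons.1 hpA).2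
      have hpB' := (List.pairwise_cons.1 hpB).2
      have hA'lb := (List.pairwise_cons.1 hpA).1
      have hB'lb := (List.pairwise_cons.1 hpB).1
      simp only [List.length_cons] at hlen
      rcases le_or_gt I.2 J.1 with hcase1 | hd
      · -- I entirely before J
        obtain ⟨Z, hZs, hZm, hZsum⟩ := ih A' (J :: B')
            (by simp only [List.length_cons]; omega)
            hpA' hpB (fun K hK => hltA K (by simp [hK])) hltB
            (fun K hK => hwA K (by simp [hK])) hwB
        have hge : ∀ z ∈ Z, I.2 ≤ z := by
          intro z hz
          rcases hZm z hz with ⟨K, hK, hzK⟩ | ⟨K, hK, hzK⟩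
          · have h1 : I.2 ≤ K.1 := hA'lb K hK
            have h2 : K.1 < K.2 := hltA K (by simp [hK])
            rcases hzK with rfl | rfl <;> linarith
          · have h1 := endpoint_lb hpB hltB K hK
            rcases hzK with rfl | rfl
            · linarith [h1.1]
            · linarith [h1.2]
        obtain ⟨Z', hZ's, hZ'm, hZ'sum⟩ := prepend (pw f c) (pw_nonneg f c) hIA hZs hge
        refine ⟨Z', hZ's, ?_, ?_⟩
        · intro z hz
          rcases hZ'm z hz with rfl | rfl | hz'
          · exact Or.inl ⟨I, by simp, Or.inl rfl⟩
          · exact Or.inl ⟨I, by simp, Or.inr rfl⟩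
          · rcases hZm z hz' with ⟨K, hK, h⟩ | ⟨K, hK, h⟩
            · exact Or.inl ⟨K, by simp [hK], h⟩
            · exact Or.inr ⟨K, hK, h⟩
        · have h1 := up_le_pw f c I.1 I.2
          simp only [rsum_cons] at hZsum ⊢
          linarith
      rcases le_or_gt J.2 I.1 with hcase2 | he
      · -- J entirely before I
        obtain ⟨Z, hZs, hZm, hZsum⟩ := ih (I :: A') B'
            (by simp only [List.length_cons]; omega)
            hpA hpB' hltA (fun K hK => hltB K (by simp [hK]))
            hwA (fun K hK => hwB K (by simp [hK]))
        have hge : ∀ z ∈ Z, J.2 ≤ z := by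
          intro z hz
          rcases hZm z hz with ⟨K, hK, hzK⟩ | ⟨K, hK, hzK⟩
          · have h1 := endpoint_lb hpA hltA K hK
            rcases hzK with rfl | rfl
            · linarith [h1.1]
            · linarith [h1.2]
          · have h1 : J.2 ≤ K.1 := hB'lb K hK
            have h2 : K.1 < K.2 := hltB K (by simp [hK])
            rcases hzK with rfl | rfl <;> linarith
        obtain ⟨Z', hZ's, hZ'm, hZ'sum⟩ := prepend (pw f c) (pw_nonneg f c) hJB hZs hge
        refine ⟨Z', hZ's, ?_, ?_⟩
        · intro z hz
          rcases hZ'm z hz with rfl | rfl | hz'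
          · exact Or.inr ⟨J, by simp, Or.inl rfl⟩
          · exact Or.inr ⟨J, by simp, Or.inr rfl⟩
          · rcases hZm z hz' with ⟨K, hK, h⟩ | ⟨K, hK, h⟩
            · exact Or.inl ⟨K, hK, h⟩
            · exact Or.inr ⟨K, by simp [hK], h⟩
        · have h1 := down_le_pw f c J.1 J.2
          simp only [rsum_cons] at hZsum ⊢
          linarith
      · -- overlap : J.1 < I.2 and I.1 < J.2
        rcases le_or_gt I.2 J.2 with h3i | h3ii
        · -- right piece is a (possible) downward interval (I.2, J.2)
          by_cases hkeep : c < f I.2 - f J.2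
          · have hI2J2 : I.2 < J.2 := by
              rcases eq_or_lt_of_le h3i with hh | hh
              · rw [hh] at hkeep; linarith
              · exact hh
            have hpB2 : ((I.2, J.2) :: B').Pairwise (fun I K => I.2 ≤ K.1) :=
              List.pairwise_cons.2 ⟨fun K hK => hB'lb K hK, hpB'⟩
            have hltB2 : ∀ K ∈ (I.2, J.2) :: B', K.1 < K.2 := by
              intro K hK
              rcases List.mem_cons.1 hK with rfl | hK
              · exact hI2J2
              · exact hltB K (by simp [hK])
            have hwB2 : ∀ K ∈ (I.2, J.2) :: B', c < f K.1 - f K.2 := by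
              intro K hK
              rcases List.mem_cons.1 hK with rfl | hK
              · exact hkeep
              · exact hwB K (by simp [hK])
            obtain ⟨Z, hZs, hZm, hZsum⟩ := ih A' ((I.2, J.2) :: B')
                (by simp only [List.length_cons]; omega)
                hpA' hpB2 (fun K hK => hltA K (by simp [hK])) hltB2
                (fun K hK => hwA K (by simp [hK])) hwB2
            have hge : ∀ z ∈ Z, max I.1 J.1 ≤ z := by
              intro z hz
              have hmax : max I.1 J.1 ≤ I.2 := max_le (le_of_lt hIA) (le_of_lt hd)
              rcases hZm z hz with ⟨K, hK, hzK⟩ | ⟨K, hK, hzK⟩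
              · have h1 : I.2 ≤ K.1 := hA'lb K hK
                have h2 : K.1 < K.2 := hltA K (by simp [hK])
                rcases hzK with rfl | rfl <;> linarith
              · have h1 := endpoint_lb hpB2 hltB2 K hK
                rcases hzK with rfl | rfl
                · exact hmax.trans h1.1
                · exact hmax.trans h1.2
            obtain ⟨Z', hZ's, hZ'm, hZ'sum⟩ := leftpiece f hc hZs hge
            refine ⟨Z', hZ's, ?_, ?_⟩
            · intro z hz
              rcases hZ'm z hz with rfl | rfl | hz'
              · exact Or.inl ⟨I, by simp, Or.inl rfl⟩
              · exact Or.inr ⟨J, by simp, Or.inl rfl⟩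
              · rcases hZm z hz' with ⟨K, hK, h⟩ | ⟨K, hK, h⟩
                · exact Or.inl ⟨K, by simp [hK], h⟩
                · rcases List.mem_cons.1 hK with rfl | hK
                  · rcases h with rfl | rfl
                    · exact Or.inl ⟨I, by simp, Or.inr rfl⟩
                    · exact Or.inr ⟨J, by simp, Or.inr rfl⟩
                  · exact Or.inr ⟨K, by simp [hK], h⟩
            · simp only [rsum_cons] at hZsum ⊢
              linarith
          · obtain ⟨Z, hZs, hZm, hZsum⟩ := ih A' B' (by omega)
                hpA' hpB' (fun K hK => hltA K (by simp [hK]))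
                (fun K hK => hltB K (by simp [hK]))
                (fun K hK => hwA K (by simp [hK]))
                (fun K hK => hwB K (by simp [hK]))
            have hge : ∀ z ∈ Z, max I.1 J.1 ≤ z := by
              intro z hz
              have hmax1 : max I.1 J.1 ≤ I.2 := max_le (le_of_lt hIA) (le_of_lt hd)
              have hmax2 : max I.1 J.1 ≤ J.2 := max_le (le_of_lt he) (le_of_lt hJB)
              rcases hZm z hz with ⟨K, hK, hzK⟩ | ⟨K, hK, hzK⟩
              · have h1 : I.2 ≤ K.1 := hA'lb K hK
                have h2 : K.1 < K.2 := hltA K (by simp [hK])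
                rcases hzK with rfl | rfl <;> linarith
              · have h1 : J.2 ≤ K.1 := hB'lb K hK
                have h2 : K.1 < K.2 := hltB K (by simp [hK])
                rcases hzK with rfl | rfl <;> linarith
            obtain ⟨Z', hZ's, hZ'm, hZ'sum⟩ := leftpiece f hc hZs hge
            refine ⟨Z', hZ's, ?_, ?_⟩
            · intro z hz
              rcases hZ'm z hz with rfl | rfl | hz'
              · exact Or.inl ⟨I, by simp, Or.inl rfl⟩
              · exact Or.inr ⟨J, by simp, Or.inl rfl⟩
              · rcases hZm z hz' with ⟨K, hK, h⟩ | ⟨K, hK, h⟩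
                · exact Or.inl ⟨K, by simp [hK], h⟩
                · exact Or.inr ⟨K, by simp [hK], h⟩
            · have hdrop : f I.2 - f J.2 - c ≤ 0 := by
                simp only [not_lt] at hkeep; linarith
              simp only [rsum_cons] at hZsum ⊢
              linarith
        · -- right piece is a (possible) upward interval (J.2, I.2)
          by_cases hkeep : c < f I.2 - f J.2
          · have hpA2 : ((J.2, I.2) :: A').Pairwise (fun I K => I.2 ≤ K.1) :=
              List.pairwise_cons.2 ⟨fun K hK => hA'lb K hK, hpA'⟩
            have hltA2 : ∀ K ∈ (J.2, I.2) :: A', K.1 < K.2 := by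
              intro K hK
              rcases List.mem_cons.1 hK with rfl | hK
              · exact h3ii
              · exact hltA K (by simp [hK])
            have hwA2 : ∀ K ∈ (J.2, I.2) :: A', c < f K.2 - f K.1 := by
              intro K hK
              rcases List.mem_cons.1 hK with rfl | hK
              · exact hkeep
              · exact hwA K (by simp [hK])
            obtain ⟨Z, hZs, hZm, hZsum⟩ := ih ((J.2, I.2) :: A') B'
                (by simp only [List.length_cons]; omega)
                hpA2 hpB' hltA2 (fun K hK => hltB K (by simp [hK]))
                hwA2 (fun K hK => hwB K (by simp [hK]))
            have hge : ∀ z ∈ Z, max I.1 J.1 ≤ z := by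
              intro z hz
              have hmax : max I.1 J.1 ≤ J.2 := max_le (le_of_lt he) (le_of_lt hJB)
              rcases hZm z hz with ⟨K, hK, hzK⟩ | ⟨K, hK, hzK⟩
              · have h1 := endpoint_lb hpA2 hltA2 K hK
                rcases hzK with rfl | rfl
                · exact hmax.trans h1.1
                · exact hmax.trans h1.2
              · have h1 : J.2 ≤ K.1 := hB'lb K hK
                have h2 : K.1 < K.2 := hltB K (by simp [hK])
                rcases hzK with rfl | rfl <;> linarith
            obtain ⟨Z', hZ's, hZ'm, hZ'sum⟩ := leftpiece f hc hZs hge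
            refine ⟨Z', hZ's, ?_, ?_⟩
            · intro z hz
              rcases hZ'm z hz with rfl | rfl | hz'
              · exact Or.inl ⟨I, by simp, Or.inl rfl⟩
              · exact Or.inr ⟨J, by simp, Or.inl rfl⟩
              · rcases hZm z hz' with ⟨K, hK, h⟩ | ⟨K, hK, h⟩
                · rcases List.mem_cons.1 hK with rfl | hK
                  · rcases h with rfl | rfl
                    · exact Or.inr ⟨J, by simp, Or.inr rfl⟩
                    · exact Or.inl ⟨I, by simp, Or.inr rfl⟩
                  · exact Or.inl ⟨K, by simp [hK], h⟩
                · exact Or.inr ⟨K, by simp [hK], h⟩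
            · simp only [rsum_cons] at hZsum ⊢
              linarith
          · obtain ⟨Z, hZs, hZm, hZsum⟩ := ih A' B' (by omega)
                hpA' hpB' (fun K hK => hltA K (by simp [hK]))
                (fun K hK => hltB K (by simp [hK]))
                (fun K hK => hwA K (by simp [hK]))
                (fun K hK => hwB K (by simp [hK]))
            have hge : ∀ z ∈ Z, max I.1 J.1 ≤ z := by
              intro z hz
              have hmax1 : max I.1 J.1 ≤ I.2 := max_le (le_of_lt hIA) (le_of_lt hd)
              have hmax2 : max I.1 J.1 ≤ J.2 := max_le (le_of_lt he) (le_of_lt hJB)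
              rcases hZm z hz with ⟨K, hK, hzK⟩ | ⟨K, hK, hzK⟩
              · have h1 : I.2 ≤ K.1 := hA'lb K hK
                have h2 : K.1 < K.2 := hltA K (by simp [hK])
                rcases hzK with rfl | rfl <;> linarith
              · have h1 : J.2 ≤ K.1 := hB'lb K hK
                have h2 : K.1 < K.2 := hltB K (by simp [hK])
                rcases hzK with rfl | rfl <;> linarith
            obtain ⟨Z', hZ's, hZ'm, hZ'sum⟩ := leftpiece f hc hZs hge
            refine ⟨Z', hZ's, ?_, ?_⟩
            · intro z hz
              rcases hZ'm z hz with rfl | rfl | hz'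
              · exact Or.inl ⟨I, by simp, Or.inl rfl⟩
              · exact Or.inr ⟨J, by simp, Or.inl rfl⟩
              · rcases hZm z hz' with ⟨K, hK, h⟩ | ⟨K, hK, h⟩
                · exact Or.inl ⟨K, by simp [hK], h⟩
                · exact Or.inr ⟨K, by simp [hK], h⟩
            · have hdrop : f I.2 - f J.2 - c ≤ 0 := by
                simp only [not_lt] at hkeep; linarith
              simp only [rsum_cons] at hZsum ⊢
              linarith

lemma right_lemma (f : ℝ → ℝ) {c : ℝ} (hc : 0 < c) :
    ∀ (V : List (ℝ × ℝ)), ∀ {u s q0 : ℝ}, u ≤ s → u ≤ q0 → q0 ≤ s →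
      V.Pairwise (fun I J => I.2 ≤ J.1) → (∀ I ∈ V, I.1 < I.2) →
      (∀ I ∈ V, c < f I.2 - f I.1) → (∀ I ∈ V, q0 ≤ I.1 ∧ I.2 ≤ s) →
      ∃ M : List ℝ, M.Pairwise (· < ·) ∧ (∀ x ∈ M, u ≤ x ∧ x ≤ s) ∧
        max (f q0 - f u) 0 + rsum (fun I => f I.2 - f I.1 - c) V
          ≤ (f s - f u) + c + sumW (dw f c) M := by
  intro V
  induction V using List.reverseRecOn with
  | nil =>
    intro u s q0 hus huq hqs _ _ _ _
    rcases le_or_gt (f q0 - f u) 0 with hneg | hpos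
    · rcases eq_or_lt_of_le hus with rfl | hlt
      · refine ⟨[], by simp, by simp, ?_⟩
        rw [max_eq_right hneg]
        simp [sumW]
        linarith
      · refine ⟨[u, s], by simp [hlt], ?_, ?_⟩
        · intro x hx
          rcases List.mem_cons.1 hx with rfl | hx
          · exact ⟨le_rfl, hus⟩
          · simp at hx; rw [hx]; exact ⟨hus, le_rfl⟩
        · rw [max_eq_right hneg]
          have h1 : f u - f s - c ≤ dw f c u s := le_max_left _ _
          have h2 : sumW (dw f c) [u, s] = dw f c u s := by simp [sumW]
          rw [rsum_nil, h2]
          linarith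
    · rcases eq_or_lt_of_le hqs with rfl | hlt
      · refine ⟨[], by simp, by simp, ?_⟩
        rw [max_eq_left (le_of_lt hpos)]
        simp [sumW]
        linarith
      · refine ⟨[q0, s], by simp [hlt], ?_, ?_⟩
        · intro x hx
          rcases List.mem_cons.1 hx with rfl | hx
          · exact ⟨huq, hqs⟩
          · simp at hx; rw [hx]; exact ⟨hus, le_rfl⟩
        · rw [max_eq_left (le_of_lt hpos)]
          have h1 : f q0 - f s - c ≤ dw f c q0 s := le_max_left _ _
          have h2 : sumW (dw f c) [q0, s] = dw f c q0 s := by simp [sumW]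
          rw [rsum_nil, h2]
          linarith
  | append_singleton V I ihV =>
    intro u s q0 hus huq hqs hp hlt hw hmem
    have hpV : V.Pairwise (fun I J => I.2 ≤ J.1) := (List.pairwise_append.1 hp).1
    have hVI : ∀ J ∈ V, J.2 ≤ I.1 :=
      fun J hJ => (List.pairwise_append.1 hp).2.2 J hJ I (by simp)
    have hI1 : q0 ≤ I.1 := (hmem I (by simp)).1
    have hI2 : I.2 ≤ s := (hmem I (by simp)).2
    have hIlt : I.1 < I.2 := hlt I (by simp)
    have hIw : c < f I.2 - f I.1 := hw I (by simp)
    obtain ⟨M1, hM1s, hM1m, hM1sum⟩ := ihV (u := u) (s := I.1) (q0 := q0)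
        (huq.trans hI1) huq hI1 hpV
        (fun J hJ => hlt J (by simp [hJ]))
        (fun J hJ => hw J (by simp [hJ]))
        (by
          intro J hJ
          refine ⟨(hmem J (by simp [hJ])).1, hVI J hJ⟩)
    rcases eq_or_lt_of_le (hI2.trans_eq rfl : I.2 ≤ s) with heq | hI2s
    · -- I.2 = s
      refine ⟨M1, hM1s, ?_, ?_⟩
      · intro x hx
        exact ⟨(hM1m x hx).1, (hM1m x hx).2.trans (le_of_lt (hIlt.trans_le hI2))⟩
      · rw [rsum, List.map_append, List.sum_append, ← rsum]
        simp only [List.map_cons, List.map_nil, List.sum_cons, List.sum_nil, add_zero]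
        rw [← heq]
        linarith
    · refine ⟨M1 ++ [I.2, s], ?_, ?_, ?_⟩
      · rw [List.pairwise_append]
        refine ⟨hM1s, by simp [hI2s], ?_⟩
        intro x hx y hy
        have h1 : x ≤ I.1 := (hM1m x hx).2
        have h2 : I.2 ≤ y := by
          rcases List.mem_cons.1 hy with rfl | hy
          · exact le_rfl
          · simp at hy; rw [hy]; exact hI2
        linarith
      · intro x hx
        rcases List.mem_append.1 hx with hx | hx
        · exact ⟨(hM1m x hx).1, (hM1m x hx).2.trans (hIlt.le.trans hI2)⟩
        · rcases List.mem_cons.1 hx with rfl | hx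
          · exact ⟨(huq.trans hI1).trans (le_of_lt hIlt), hI2⟩
          · simp at hx; rw [hx]; exact ⟨hus, le_rfl⟩
      · have hge : sumW (dw f c) M1 + sumW (dw f c) [I.2, s] ≤
            sumW (dw f c) (M1 ++ [I.2, s]) :=
          sumW_append_ge (dw f c) (dw_nonneg f c) M1 [I.2, s]
        have h2 : sumW (dw f c) [I.2, s] = dw f c I.2 s := by simp [sumW]
        have h3 : f I.2 - f s - c ≤ dw f c I.2 s := le_max_left _ _
        rw [rsum, List.map_append, List.sum_append, ← rsum]
        simp only [List.map_cons, List.map_nil, List.sum_cons, List.sum_nil, add_zero]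
        rw [h2] at hge
        linarith

lemma uw_pos_iff {f : ℝ → ℝ} {c p q : ℝ} (h : 0 < uw f c p q) : c < f q - f p := by
  by_contra hcon
  push_neg at hcon
  have : uw f c p q = 0 := max_eq_right (by linarith)
  linarith

lemma uw_eq_of_big {f : ℝ → ℝ} {c p q : ℝ} (h : c < f q - f p) :
    uw f c p q = f q - f p - c := max_eq_left (by linarith)

lemma max_split (x y c : ℝ) : max (x + y - c) 0 ≤ max (x - c) 0 + max y 0 := by
  rcases le_total (x + y - c) 0 with h | h
  · rw [max_eq_right h]
    exact add_nonneg (le_max_right _ _) (le_max_right _ _)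
  · rw [max_eq_left h]
    have h1 : x - c ≤ max (x - c) 0 := le_max_left _ _
    have h2 : y ≤ max y 0 := le_max_left _ _
    linarith

lemma mem_dropWhile_gt {u : ℝ} :
    ∀ (L : List ℝ), L.Pairwise (· < ·) →
      ∀ x ∈ L.dropWhile (fun z => decide (z ≤ u)), u < x := by
  intro L
  induction L with
  | nil => simp
  | cons y L ih =>
    intro hs x hx
    rw [List.dropWhile_cons] at hx
    by_cases hyu : y ≤ u
    · simp only [hyu] at hx
      simp at hx
      exact ih (List.pairwise_cons.1 hs).2 x hx
    · simp only [hyu] at hx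
      simp at hx
      rcases hx with rfl | hx
      · exact lt_of_not_ge hyu
      · exact (lt_of_not_ge hyu).trans ((List.pairwise_cons.1 hs).1 x hx)

lemma real_eps_le {x y : ℝ} (h : ∀ ε : ℝ, 0 < ε → x ≤ y + ε) : x ≤ y := by
  by_contra hcon
  push_neg at hcon
  have := h ((x - y) / 2) (by linarith)
  linarith

lemma F2a (f : ℝ → ℝ) {c a u s : ℝ} (hc : 0 < c) (hau : a ≤ u) (hus : u ≤ s)
    (hU : genVar (uw f c) a s ≠ ⊤) (hD : genVar (dw f c) a s ≠ ⊤) :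
    (genVar (uw f c) a s).toReal + (genVar (dw f c) a u).toReal ≤
      (genVar (uw f c) a u).toReal + (genVar (dw f c) a s).toReal + (f s - f u) + c := by
  have hUu : genVar (uw f c) a u ≠ ⊤ := ne_top_of_le_ne_top hU (genVar_mono_right _ hus)
  have hDu : genVar (dw f c) a u ≠ ⊤ := ne_top_of_le_ne_top hD (genVar_mono_right _ hus)
  have key : ∀ ε : ℝ, 0 < ε →
      (genVar (uw f c) a s).toReal + (genVar (dw f c) a u).toReal ≤
        ((genVar (uw f c) a u).toReal + (genVar (dw f c) a s).toReal + (f s - f u) + c) + ε := by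
    intro ε hε
    obtain ⟨L, hLs, hLm, hLval⟩ := genVar_exists (uw f c) (uw_nonneg f c) hU (half_pos hε)
    obtain ⟨M, hMs, hMm, hMval⟩ := genVar_exists (dw f c) (dw_nonneg f c) hDu (half_pos hε)
    set p : ℝ → Bool := fun z => decide (z ≤ u) with hp
    set P := L.takeWhile p with hP
    set Q := L.dropWhile p with hQ
    have hPQ : P ++ Q = L := by
      rw [hP, hQ]; exact List.takeWhile_append_dropWhile
    have hPs : P.Pairwise (· < ·) := hLs.sublist (List.takeWhile_sublist p)
    have hQs : Q.Pairwise (· < ·) := hLs.sublist (List.dropWhile_sublist p)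
    have hPmemL : ∀ x ∈ P, x ∈ L := fun x hx => (List.takeWhile_sublist p).subset hx
    have hQmemL : ∀ x ∈ Q, x ∈ L := fun x hx => (List.dropWhile_sublist p).subset hx
    have hPmem : ∀ x ∈ P, a ≤ x ∧ x ≤ u := by
      intro x hx
      have h1 := List.mem_takeWhile_imp hx
      simp only [hp, decide_eq_true_eq] at h1
      exact ⟨(hLm x (hPmemL x hx)).1, h1⟩
    have hQgt : ∀ x ∈ Q, u < x := mem_dropWhile_gt L hLs
    -- a common down-estimate: given a chain M2 in [u,s], join with M and bound by D(s)
    have downside : ∀ M2 : List ℝ, M2.Pairwise (· < ·) → (∀ x ∈ M2, u ≤ x ∧ x ≤ s) →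
        sumW (dw f c) M + sumW (dw f c) M2 ≤ (genVar (dw f c) a s).toReal := by
      intro M2 hM2s hM2m
      obtain ⟨Z, hZs, hZm, hZsum⟩ := join (dw f c) (dw_nonneg f c) (u := u) hMs hM2s
        (fun x hx => (hMm x hx).2) (fun x hx => (hM2m x hx).1)
      refine le_trans hZsum (sumW_le_toReal (dw f c) (dw_nonneg f c) hZs ?_ hD)
      intro z hz
      rcases hZm z hz with hz' | hz'
      · exact ⟨(hMm z hz').1, (hMm z hz').2.trans hus⟩
      · exact ⟨hau.trans (hM2m z hz').1, (hM2m z hz').2⟩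
    -- main upper bound for sumW uw L
    have main : ∃ M2 : List ℝ, M2.Pairwise (· < ·) ∧ (∀ x ∈ M2, u ≤ x ∧ x ≤ s) ∧
        sumW (uw f c) L ≤ (genVar (uw f c) a u).toReal + (f s - f u) + c +
          sumW (dw f c) M2 := by
      cases hQc : Q with
      | nil =>
        -- L is contained in [a,u]
        have hLu : ∀ x ∈ L, a ≤ x ∧ x ≤ u := by
          intro x hx
          rw [← hPQ, hQc, List.append_nil] at hx
          exact hPmem x hx
        have h1 : sumW (uw f c) L ≤ (genVar (uw f c) a u).toReal :=
          sumW_le_toReal (uw f c) (uw_nonneg f c) hLs hLu hUu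
        rcases eq_or_lt_of_le hus with rfl | hlt
        · exact ⟨[], by simp, by simp, by simp [sumW]; linarith⟩
        · refine ⟨[u, s], by simp [hlt], ?_, ?_⟩
          · intro x hx
            rcases List.mem_cons.1 hx with rfl | hx
            · exact ⟨le_rfl, hus⟩
            · simp at hx; rw [hx]; exact ⟨hus, le_rfl⟩
          · have h2 : sumW (dw f c) [u, s] = dw f c u s := by simp [sumW]
            have h3 : f u - f s - c ≤ dw f c u s := le_max_left _ _
            rw [h2]
            linarith
      | cons q0 Q' =>
        have hQne : Q ≠ [] := by rw [hQc]; simp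
        have hq0Q : q0 ∈ Q := by rw [hQc]; simp
        have hq0u : u < q0 := hQgt q0 hq0Q
        have hq0s : q0 ≤ s := (hLm q0 (hQmemL q0 hq0Q)).2
        obtain ⟨V, hVp, hVo, hVsum⟩ := extract (uw f c) (uw_nonneg f c) Q hQs
        have hVbig : ∀ I ∈ V, c < f I.2 - f I.1 := fun I hI => uw_pos_iff (hVo I hI).2.1
        have hVmem : ∀ I ∈ V, q0 ≤ I.1 ∧ I.2 ≤ s := by
          intro I hI
          have h1 : I.1 ∈ Q := (hVo I hI).2.2.1
          have h2 : I.2 ∈ Q := (hVo I hI).2.2.2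
          constructor
          · rw [hQc] at h1
            exact sorted_head_le (hQc ▸ hQs) (by simp) (by simpa using h1)
          · exact (hLm I.2 (hQmemL _ h2)).2
        obtain ⟨M2, hM2s, hM2m, hM2val⟩ := right_lemma f hc V (u := u) (s := s) (q0 := q0)
          hus (le_of_lt hq0u) hq0s hVp (fun I hI => (hVo I hI).1) hVbig hVmem
        have hVconv : rsum (fun I => f I.2 - f I.1 - c) V = sumW (uw f c) Q := by
          rw [← hVsum, rsum, rsum]
          congr 1
          exact List.map_congr_left fun I hI => (uw_eq_of_big (hVbig I hI)).symm
        have hQbound : sumW (uw f c) Q ≤ max (f q0 - f u) 0 + rsum (fun I => f I.2 - f I.1 - c) V := by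
          rw [hVconv]
          exact le_add_of_nonneg_left (le_max_right _ _)
        cases hPc : P with
        | nil =>
          have hLQ : L = Q := by rw [← hPQ, hPc, List.nil_append]
          refine ⟨M2, hM2s, hM2m, ?_⟩
          have h0 : (0:ℝ) ≤ (genVar (uw f c) a u).toReal := ENNReal.toReal_nonneg
          rw [hLQ]
          calc sumW (uw f c) Q ≤ max (f q0 - f u) 0 + rsum (fun I => f I.2 - f I.1 - c) V := hQbound
            _ ≤ (f s - f u) + c + sumW (dw f c) M2 := hM2val
            _ ≤ _ := by linarith
        | cons p0 P' =>
          have hPne : P ≠ [] := by rw [hPc]; simp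
          set pstar := P.getLast hPne with hpstar
          have hpsu : pstar ≤ u := (hPmem _ (List.getLast_mem hPne)).2
          have hpsa : a ≤ pstar := (hPmem _ (List.getLast_mem hPne)).1
          have hsplit : sumW (uw f c) L = sumW (uw f c) P + uw f c pstar q0 + sumW (uw f c) Q := by
            rw [← hPQ, hQc, sumW_append (uw f c) P hPne (q0 :: Q') (by simp)]
            simp [List.head, hpstar]
          have hkey : uw f c pstar q0 ≤ uw f c pstar u + max (f q0 - f u) 0 := by
            have := max_split (f u - f pstar) (f q0 - f u) c
            have he1 : f u - f pstar + (f q0 - f u) = f q0 - f pstar := by ring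
            rw [he1] at this
            exact this
          -- the chain for U(u)
          have hup : sumW (uw f c) P + uw f c pstar u ≤ (genVar (uw f c) a u).toReal := by
            rcases eq_or_lt_of_le hpsu with heq | hlt
            · have : uw f c pstar u = 0 := by
                rw [heq]
                exact max_eq_right (by linarith)
              rw [this, add_zero]
              exact sumW_le_toReal (uw f c) (uw_nonneg f c) hPs hPmem hUu
            · have hs2 : (P ++ [u]).Pairwise (· < ·) := by
                rw [List.pairwise_append]
                refine ⟨hPs, by simp, ?_⟩
                intro x hx y hy
                simp at hy
                rw [hy]
                exact lt_of_le_of_lt (sorted_le_getLast hPs hPne hx) hlt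
              have hm2 : ∀ x ∈ P ++ [u], a ≤ x ∧ x ≤ u := by
                intro x hx
                rcases List.mem_append.1 hx with hx | hx
                · exact hPmem x hx
                · simp at hx; rw [hx]; exact ⟨hau, le_rfl⟩
              have heq2 : sumW (uw f c) (P ++ [u]) = sumW (uw f c) P + uw f c pstar u := by
                rw [sumW_append (uw f c) P hPne [u] (by simp)]
                simp [sumW, hpstar]
              rw [← heq2]
              exact sumW_le_toReal (uw f c) (uw_nonneg f c) hs2 hm2 hUu
          refine ⟨M2, hM2s, hM2m, ?_⟩
          calc sumW (uw f c) L = sumW (uw f c) P + uw f c pstar q0 + sumW (uw f c) Q := hsplit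
            _ ≤ sumW (uw f c) P + (uw f c pstar u + max (f q0 - f u) 0) + sumW (uw f c) Q := by linarith
            _ ≤ (genVar (uw f c) a u).toReal + max (f q0 - f u) 0 + sumW (uw f c) Q := by linarith
            _ ≤ (genVar (uw f c) a u).toReal + max (f q0 - f u) 0 +
                (max (f q0 - f u) 0 + rsum (fun I => f I.2 - f I.1 - c) V) - max (f q0 - f u) 0 := by
                  linarith [hQbound]
            _ ≤ (genVar (uw f c) a u).toReal + (f s - f u) + c + sumW (dw f c) M2 := by
                  linarith [hM2val]
    obtain ⟨M2, hM2s, hM2m, hmain⟩ := main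
    have hdown := downside M2 hM2s hM2m
    linarith
  exact real_eps_le key

lemma dw_pos_iff {f : ℝ → ℝ} {c p q : ℝ} (h : 0 < dw f c p q) : c < f p - f q := by
  by_contra hcon
  push_neg at hcon
  have : dw f c p q = 0 := max_eq_right (by linarith)
  linarith

lemma dw_eq_of_big {f : ℝ → ℝ} {c p q : ℝ} (h : c < f p - f q) :
    dw f c p q = f p - f q - c := max_eq_left (by linarith)

lemma uw_le_pw (f : ℝ → ℝ) (c p q : ℝ) : uw f c p q ≤ pw f c p q :=
  max_le_max (by have := le_abs_self (f q - f p); linarith) le_rfl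

lemma dw_le_pw (f : ℝ → ℝ) (c p q : ℝ) : dw f c p q ≤ pw f c p q :=
  max_le_max (by have := neg_abs_le (f q - f p); linarith) le_rfl

lemma UD_le_TV (f : ℝ → ℝ) {c a s : ℝ} (hc : 0 < c) :
    genVar (uw f c) a s + genVar (dw f c) a s ≤ genVar (pw f c) a s := by
  rcases eq_or_ne (genVar (pw f c) a s) ⊤ with htop | htop
  · rw [htop]; exact le_top
  have hU : genVar (uw f c) a s ≠ ⊤ :=
    ne_top_of_le_ne_top htop (genVar_mono_w (uw_le_pw f c) a s)
  have hD : genVar (dw f c) a s ≠ ⊤ :=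
    ne_top_of_le_ne_top htop (genVar_mono_w (dw_le_pw f c) a s)
  have key : ∀ ε : ℝ, 0 < ε →
      (genVar (uw f c) a s).toReal + (genVar (dw f c) a s).toReal ≤
        (genVar (pw f c) a s).toReal + ε := by
    intro ε hε
    obtain ⟨L, hLs, hLm, hLval⟩ := genVar_exists (uw f c) (uw_nonneg f c) hU (half_pos hε)
    obtain ⟨M, hMs, hMm, hMval⟩ := genVar_exists (dw f c) (dw_nonneg f c) hD (half_pos hε)
    obtain ⟨VA, hVAp, hVAo, hVAsum⟩ := extract (uw f c) (uw_nonneg f c) L hLs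
    obtain ⟨VB, hVBp, hVBo, hVBsum⟩ := extract (dw f c) (dw_nonneg f c) M hMs
    obtain ⟨Z, hZs, hZm, hZsum⟩ := merge f hc (VA.length + VB.length) VA VB le_rfl
      hVAp hVBp (fun I hI => (hVAo I hI).1) (fun I hI => (hVBo I hI).1)
      (fun I hI => uw_pos_iff (hVAo I hI).2.1)
      (fun I hI => dw_pos_iff (hVBo I hI).2.1)
    have hZmem : ∀ z ∈ Z, a ≤ z ∧ z ≤ s := by
      intro z hz
      rcases hZm z hz with ⟨I, hI, h⟩ | ⟨I, hI, h⟩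
      · rcases h with rfl | rfl
        · exact hLm _ (hVAo I hI).2.2.1
        · exact hLm _ (hVAo I hI).2.2.2
      · rcases h with rfl | rfl
        · exact hMm _ (hVBo I hI).2.2.1
        · exact hMm _ (hVBo I hI).2.2.2
    have hZle : sumW (pw f c) Z ≤ (genVar (pw f c) a s).toReal :=
      sumW_le_toReal (pw f c) (pw_nonneg f c) hZs hZmem htop
    have hVAconv : rsum (fun I => f I.2 - f I.1 - c) VA = sumW (uw f c) L := by
      rw [← hVAsum, rsum, rsum]
      congr 1
      exact List.map_congr_left fun I hI =>
        (uw_eq_of_big (uw_pos_iff (hVAo I hI).2.1)).symm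
    have hVBconv : rsum (fun I => f I.1 - f I.2 - c) VB = sumW (dw f c) M := by
      rw [← hVBsum, rsum, rsum]
      congr 1
      exact List.map_congr_left fun I hI =>
        (dw_eq_of_big (dw_pos_iff (hVBo I hI).2.1)).symm
    rw [hVAconv, hVBconv] at hZsum
    linarith
  have hreal := real_eps_le key
  calc genVar (uw f c) a s + genVar (dw f c) a s
      = ENNReal.ofReal ((genVar (uw f c) a s).toReal + (genVar (dw f c) a s).toReal) := by
        rw [ENNReal.ofReal_add ENNReal.toReal_nonneg ENNReal.toReal_nonneg,
          ENNReal.ofReal_toReal hU, ENNReal.ofReal_toReal hD]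
    _ ≤ ENNReal.ofReal ((genVar (pw f c) a s).toReal) := ENNReal.ofReal_le_ofReal hreal
    _ = genVar (pw f c) a s := ENNReal.ofReal_toReal htop

/-! ### càdlàg functions admit partitions with small oscillation -/

lemma osc_partition (f : ℝ → ℝ) {a b : ℝ} (hab : a < b) (hf : CadlagOn f a b)
    {ε : ℝ} (hε : 0 < ε) :
    ∃ (k : ℕ) (t : ℕ → ℝ), t 0 = a ∧ t k = b ∧ (∀ i < k, t i < t (i + 1)) ∧
      ∀ i < k, ∀ x ∈ Ico (t i) (t (i + 1)), ∀ y ∈ Ico (t i) (t (i + 1)),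
        |f x - f y| ≤ ε := by
  set Pp : ℝ → Prop := fun r => ∃ (k : ℕ) (t : ℕ → ℝ), t 0 = a ∧ t k = r ∧
    (∀ i < k, t i < t (i + 1)) ∧
    ∀ i < k, ∀ x ∈ Ico (t i) (t (i + 1)), ∀ y ∈ Ico (t i) (t (i + 1)),
      |f x - f y| ≤ ε with hPp
  set S : Set ℝ := {r | r ∈ Icc a b ∧ Pp r} with hS
  have haS : a ∈ S := by
    refine ⟨⟨le_rfl, hab.le⟩, 0, fun _ => a, rfl, rfl, ?_, ?_⟩
    · intro i hi; omega
    · intro i hi; omega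
  have hne : S.Nonempty := ⟨a, haS⟩
  have hbdd : BddAbove S := ⟨b, fun r hr => hr.1.2⟩
  have ext : ∀ r r', r ∈ S → r < r' → r' ≤ b →
      (∀ x ∈ Ico r r', ∀ y ∈ Ico r r', |f x - f y| ≤ ε) → r' ∈ S := by
    rintro r r' ⟨hrIcc, k, t, ht0, htk, hmono, hosc⟩ hrr' hr'b hoscnew
    refine ⟨⟨hrIcc.1.trans hrr'.le, hr'b⟩, k + 1, fun i => if i ≤ k then t i else r',
      ?_, ?_, ?_, ?_⟩
    · simpa using ht0
    · simp
    · intro i hi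
      by_cases hik : i + 1 ≤ k
      · simp only [if_pos (by omega : i ≤ k), if_pos hik]
        exact hmono i (by omega)
      · have hik' : i = k := by omega
        subst hik'
        simp only [if_pos le_rfl, if_neg hik, htk]
        exact hrr'
    · intro i hi x hx y hy
      by_cases hik : i + 1 ≤ k
      · simp only [if_pos (by omega : i ≤ k), if_pos hik] at hx hy
        exact hosc i (by omega) x hx y hy
      · have hik' : i = k := by omega
        subst hik'
        simp only [if_pos le_rfl, if_neg hik, htk] at hx hy
        exact hoscnew x hx y hy
  set t0 := sSup S with ht0
  have h1 : a ≤ t0 := le_csSup hbdd haS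
  have h2 : t0 ≤ b := csSup_le hne fun r hr => hr.1.2
  have hSmem : t0 ∈ S := by
    rcases eq_or_lt_of_le h1 with heq | hat0
    · exact heq ▸ haS
    · obtain ⟨Lv, hLv⟩ := hf.2 t0 ⟨hat0, h2⟩
      have hev : {x : ℝ | |f x - Lv| ≤ ε / 2} ∈ 𝓝[<] t0 := by
        have := hLv (Metric.closedBall_mem_nhds Lv (half_pos hε))
        simpa [Metric.closedBall, Real.dist_eq] using this
      obtain ⟨l, hl, hsub⟩ := mem_nhdsLT_iff_exists_Ioo_subset.1 hev
      have hmax : max l a < t0 := max_lt hl hat0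
      obtain ⟨r, hrS, hrgt⟩ := exists_lt_of_lt_csSup hne hmax
      have hrt0 : r ≤ t0 := le_csSup hbdd hrS
      rcases eq_or_lt_of_le hrt0 with heq | hlt
      · exact heq ▸ hrS
      · refine ext r t0 hrS hlt h2 ?_
        intro x hx y hy
        have hx' : x ∈ Ioo l t0 := ⟨(le_max_left l a).trans_lt (hrgt.trans_le hx.1), hx.2⟩
        have hy' : y ∈ Ioo l t0 := ⟨(le_max_left l a).trans_lt (hrgt.trans_le hy.1), hy.2⟩
        have h3 := hsub hx'
        have h4 := hsub hy'
        simp only [Set.mem_setOf_eq] at h3 h4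
        calc |f x - f y| ≤ |f x - Lv| + |Lv - f y| := abs_sub_le _ _ _
          _ = |f x - Lv| + |f y - Lv| := by rw [abs_sub_comm Lv (f y)]
          _ ≤ ε := by linarith
  rcases eq_or_lt_of_le h2 with heq | hlt
  · obtain ⟨_, k, t, p1, p2, p3, p4⟩ := hSmem
    exact ⟨k, t, p1, by rw [p2, heq], p3, p4⟩
  · exfalso
    have hrc := hf.1 t0 ⟨h1, hlt⟩
    have hev : {x : ℝ | |f x - f t0| ≤ ε / 2} ∈ 𝓝[>] t0 := by
      have := hrc (Metric.closedBall_mem_nhds (f t0) (half_pos hε))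
      simpa [Metric.closedBall, Real.dist_eq] using this
    obtain ⟨r', hr', hsub⟩ := mem_nhdsGT_iff_exists_Ioo_subset.1 hev
    set m := min ((t0 + r') / 2) b with hm
    have hmt0 : t0 < m := by
      apply lt_min
      · simp only [mem_Ioi] at hr'; linarith
      · exact hlt
    have hmr' : m < r' := by
      apply lt_of_le_of_lt (min_le_left _ _)
      simp only [mem_Ioi] at hr'; linarith
    have hmS : m ∈ S := by
      refine ext t0 m hSmem hmt0 (min_le_right _ _) ?_
      intro x hx y hy
      have hbnd : ∀ z ∈ Ico t0 m, |f z - f t0| ≤ ε / 2 := by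
        intro z hz
        rcases eq_or_lt_of_le hz.1 with rfl | hz1
        · simp; linarith
        · exact hsub ⟨hz1, hz.2.trans hmr'⟩
      have h3 := hbnd x hx
      have h4 := hbnd y hy
      calc |f x - f y| ≤ |f x - f t0| + |f t0 - f y| := abs_sub_le _ _ _
        _ = |f x - f t0| + |f y - f t0| := by rw [abs_sub_comm (f t0) (f y)]
        _ ≤ ε := by linarith
    have : m ≤ t0 := le_csSup hbdd hmS
    linarith

lemma tv_finite (f : ℝ → ℝ) {a b c : ℝ} (hab : a < b) (hc : 0 < c)
    (hf : CadlagOn f a b) : genVar (pw f c) a b ≠ ⊤ := by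
  obtain ⟨k, t, ht0, htk, hmono, hosc⟩ := osc_partition f hab hf hc
  have hk0 : 0 < k := by
    rcases Nat.eq_zero_or_pos k with rfl | h
    · rw [← ht0, htk] at hab; exact absurd hab (lt_irrefl _)
    · exact h
  have htmono : ∀ i j, i ≤ j → j ≤ k → t i ≤ t j := by
    intro i j hij hjk
    rcases eq_or_lt_of_le hij with rfl | h
    · exact le_rfl
    · exact (strictMono_of_lt hmono i j h hjk).le
  -- a uniform bound on |f| over [a,b]
  set M0 : ℝ := (Finset.range (k + 1)).sup' (by simp) (fun i => |f (t i)|) + c with hM0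
  have hM0mem : ∀ i ≤ k, |f (t i)| + c ≤ M0 := by
    intro i hi
    have := Finset.le_sup' (fun i => |f (t i)|) (Finset.mem_range.2 (by omega : i < k + 1))
    simp only [hM0]
    linarith
  have hbound : ∀ x, a ≤ x → x ≤ b → |f x| ≤ M0 := by
    intro x hax hxb
    rcases eq_or_lt_of_le hxb with rfl | hxb'
    · have := hM0mem k le_rfl; rw [htk] at this; linarith
    · obtain ⟨j, hjle, hPj, hgreat⟩ : ∃ j : ℕ, j ≤ k ∧ t j ≤ x ∧
          ∀ m, j < m → m ≤ k → ¬ t m ≤ x := by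
        refine ⟨Nat.findGreatest (fun i => t i ≤ x) k, Nat.findGreatest_le k,
          Nat.findGreatest_spec (P := fun i => t i ≤ x) (Nat.zero_le k)
            (show t 0 ≤ x by rw [ht0]; exact hax),
          fun m hm hmk => Nat.findGreatest_is_greatest hm hmk⟩
      have hjk : j < k := by
        rcases eq_or_lt_of_le hjle with heq | h
        · exfalso
          rw [heq, htk] at hPj
          linarith
        · exact h
      have hPj1 : ¬ t (j + 1) ≤ x := hgreat (j + 1) (by omega) (by omega)
      have hx : x ∈ Ico (t j) (t (j + 1)) := ⟨hPj, lt_of_not_ge hPj1⟩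
      have htj : t j ∈ Ico (t j) (t (j + 1)) := ⟨le_rfl, hmono j hjk⟩
      have := hosc j hjk x hx (t j) htj
      have h2 := hM0mem j hjle
      have h3 := abs_sub_abs_le_abs_sub (f x) (f (t j))
      linarith
  have hM0nn : 0 ≤ M0 := by
    have := hM0mem 0 (by omega)
    have := abs_nonneg (f (t 0))
    linarith
  -- every partition sum is bounded by 2 * M0 * k
  have hble : genVar (pw f c) a b ≤ ENNReal.ofReal (2 * M0 * k) := by
    refine iSup_le fun n => iSup_le fun τ => iSup_le fun hτ1 => iSup_le fun hτ2 =>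
      iSup_le fun hτ3 => ?_
    have hτmem : ∀ j ≤ n, a ≤ τ j ∧ τ j ≤ b := by
      intro j hjn
      constructor
      · rcases Nat.eq_zero_or_pos j with rfl | h
        · exact hτ1
        · exact hτ1.trans (strictMono_of_lt hτ2 0 j h hjn).le
      · rcases eq_or_lt_of_le hjn with rfl | h
        · exact hτ3
        · exact (strictMono_of_lt hτ2 j n h le_rfl).le.trans hτ3
    obtain ⟨g, hgP, hgle, hgmono, hgreat⟩ : ∃ g : ℕ → ℕ,
        (∀ j ≤ n, t (g j) ≤ τ j) ∧ (∀ j, g j ≤ k) ∧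
        (∀ j < n, g j ≤ g (j + 1)) ∧
        (∀ j, ∀ m, g j < m → m ≤ k → ¬ t m ≤ τ j) := by
      refine ⟨fun j => Nat.findGreatest (fun i => t i ≤ τ j) k, ?_, ?_, ?_, ?_⟩
      · intro j hjn
        exact Nat.findGreatest_spec (P := fun i => t i ≤ τ j) (Nat.zero_le k)
          (show t 0 ≤ τ j by rw [ht0]; exact (hτmem j hjn).1)
      · intro j; exact Nat.findGreatest_le k
      · intro j hjn
        refine Nat.le_findGreatest (Nat.findGreatest_le k) ?_
        exact (Nat.findGreatest_spec (P := fun i => t i ≤ τ j) (Nat.zero_le k)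
          (show t 0 ≤ τ j by rw [ht0]; exact (hτmem j (by omega)).1)).trans (hτ2 j hjn).le
      · intro j m hm hmk
        exact Nat.findGreatest_is_greatest hm hmk
    have hterm : ∀ j < n, pw f c (τ j) (τ (j + 1)) ≤
        2 * M0 * ((g (j + 1) : ℝ) - (g j : ℝ)) := by
      intro j hjn
      rcases eq_or_lt_of_le (hgmono j hjn) with heq | hlt
      · -- same block: oscillation small
        have hgk : g j < k := by
          rcases eq_or_lt_of_le (hgle j) with heq2 | h
          · exfalso
            have := hgP j (by omega)
            rw [heq2, htk] at this
            have h4 := (hτmem (j+1) (by omega)).2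
            have h5 := hτ2 j hjn
            linarith
          · exact h
        have hx : τ j ∈ Ico (t (g j)) (t (g j + 1)) := by
          refine ⟨hgP j (by omega), ?_⟩
          exact lt_of_not_ge (hgreat j (g j + 1) (by omega) (by omega))
        have hy : τ (j + 1) ∈ Ico (t (g j)) (t (g j + 1)) := by
          constructor
          · rw [heq]; exact hgP (j+1) (by omega)
          · have h10 := hgreat (j+1) (g j + 1) (by omega) (by omega)
            exact lt_of_not_ge h10
        have hsmall := hosc (g j) hgk (τ (j+1)) hy (τ j) hx
        have : pw f c (τ j) (τ (j + 1)) = 0 := max_eq_right (by linarith)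
        rw [this, ← heq]
        simp
      · have h3 := hbound (τ j) (hτmem j (by omega)).1 (hτmem j (by omega)).2
        have h4 := hbound (τ (j+1)) (hτmem (j+1) (by omega)).1 (hτmem (j+1) (by omega)).2
        have h5 : |f (τ (j+1)) - f (τ j)| ≤ 2 * M0 := by
          have := abs_sub (f (τ (j+1))) (f (τ j))
          calc |f (τ (j+1)) - f (τ j)| ≤ |f (τ (j+1))| + |f (τ j)| := abs_sub _ _
            _ ≤ 2 * M0 := by linarith
        have h6 : (1 : ℝ) ≤ (g (j + 1) : ℝ) - (g j : ℝ) := by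
          have : g j + 1 ≤ g (j + 1) := hlt
          have := Nat.cast_le (α := ℝ).2 this
          push_cast at this ⊢
          linarith
        have h7 : pw f c (τ j) (τ (j + 1)) ≤ 2 * M0 := by
          apply max_le _ (by linarith)
          linarith
        nlinarith
    calc ∑ i ∈ Finset.range n, ENNReal.ofReal (pw f c (τ i) (τ (i + 1)))
        = ENNReal.ofReal (∑ i ∈ Finset.range n, pw f c (τ i) (τ (i + 1))) :=
          (ENNReal.ofReal_sum_of_nonneg (fun i _ => pw_nonneg f c _ _)).symm
      _ ≤ ENNReal.ofReal (2 * M0 * k) := by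
          apply ENNReal.ofReal_le_ofReal
          calc ∑ i ∈ Finset.range n, pw f c (τ i) (τ (i + 1))
              ≤ ∑ i ∈ Finset.range n, 2 * M0 * ((g (i + 1) : ℝ) - (g i : ℝ)) := by
                apply Finset.sum_le_sum
                intro i hi
                exact hterm i (Finset.mem_range.1 hi)
            _ = 2 * M0 * ((g n : ℝ) - (g 0 : ℝ)) := by
                rw [← Finset.mul_sum, Finset.sum_range_sub (fun j => (g j : ℝ))]
            _ ≤ 2 * M0 * k := by
                have h8 : (g n : ℝ) ≤ k := Nat.cast_le.2 (hgle n)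
                have h9 : (0 : ℝ) ≤ g 0 := Nat.cast_nonneg _
                nlinarith
  exact ne_top_of_le_ne_top (by simp) hble

lemma uw_neg (f : ℝ → ℝ) (c : ℝ) : uw (fun x => -f x) c = dw f c := by
  funext p q
  simp only [uw, dw]
  ring_nf

lemma dw_neg (f : ℝ → ℝ) (c : ℝ) : dw (fun x => -f x) c = uw f c := by
  funext p q
  simp only [uw, dw]
  ring_nf

lemma claim1 (f : ℝ → ℝ) {a b c : ℝ} (hc : 0 < c) (hTV : genVar (pw f c) a b ≠ ⊤)
    {u s : ℝ} (hau : a ≤ u) (hus : u ≤ s) (hsb : s ≤ b) :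
    |(((genVar (uw f c) a s).toReal - (genVar (dw f c) a s).toReal) -
      ((genVar (uw f c) a u).toReal - (genVar (dw f c) a u).toReal)) - (f s - f u)| ≤ c := by
  have hU : genVar (uw f c) a s ≠ ⊤ :=
    ne_top_of_le_ne_top hTV ((genVar_mono_w (uw_le_pw f c) a s).trans
      (genVar_mono_right _ hsb))
  have hD : genVar (dw f c) a s ≠ ⊤ :=
    ne_top_of_le_ne_top hTV ((genVar_mono_w (dw_le_pw f c) a s).trans
      (genVar_mono_right _ hsb))
  have h1 := F2a f hc hau hus hU hD
  have hU' : genVar (uw (fun x => -f x) c) a s ≠ ⊤ := by rw [uw_neg]; exact hD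
  have hD' : genVar (dw (fun x => -f x) c) a s ≠ ⊤ := by rw [dw_neg]; exact hU
  have h2 := F2a (fun x => -f x) hc hau hus hU' hD'
  rw [uw_neg, dw_neg] at h2
  rw [abs_le]
  constructor
  · linarith
  · linarith

end TVaux

theorem utv_sub_dtv_is_optimal
    (a b c : ℝ) (hab : a < b) (hc : 0 < c) (f : ℝ → ℝ) (hf : CadlagOn f a b) :
    (∀ u ∈ Set.Icc a b, ∀ s ∈ Set.Icc a b, u ≤ s →
      |((f a + (upTruncVar f a s c).toReal - (downTruncVar f a s c).toReal) -
        (f a + (upTruncVar f a u c).toReal - (downTruncVar f a u c).toReal)) -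
       (f s - f u)| ≤ c) ∧
    (∀ s ∈ Set.Ioc a b,
      totalVar (fun t => f a + (upTruncVar f a t c).toReal -
        (downTruncVar f a t c).toReal) a s = truncVar f a s c) := by
  classical
  open TVaux in
  have hTV : genVar (pw f c) a b ≠ ⊤ := tv_finite f hab hc hf
  open TVaux in
  have hUfin : ∀ t, t ≤ b → genVar (uw f c) a t ≠ ⊤ := fun t ht =>
    ne_top_of_le_ne_top hTV ((genVar_mono_w (uw_le_pw f c) a t).trans
      (genVar_mono_right _ ht))
  open TVaux in
  have hDfin : ∀ t, t ≤ b → genVar (dw f c) a t ≠ ⊤ := fun t ht =>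
    ne_top_of_le_ne_top hTV ((genVar_mono_w (dw_le_pw f c) a t).trans
      (genVar_mono_right _ ht))
  open TVaux in
  have part1 : ∀ u ∈ Set.Icc a b, ∀ s ∈ Set.Icc a b, u ≤ s →
      |((f a + (upTruncVar f a s c).toReal - (downTruncVar f a s c).toReal) -
        (f a + (upTruncVar f a u c).toReal - (downTruncVar f a u c).toReal)) -
       (f s - f u)| ≤ c := by
    rintro u ⟨hau, hub⟩ s ⟨has, hsb⟩ hus
    have h := claim1 f hc hTV hau hus hsb
    rw [upTruncVar_eq, upTruncVar_eq, downTruncVar_eq, downTruncVar_eq]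
    have heq : ((f a + (genVar (uw f c) a s).toReal - (genVar (dw f c) a s).toReal) -
        (f a + (genVar (uw f c) a u).toReal - (genVar (dw f c) a u).toReal)) -
       (f s - f u) =
        (((genVar (uw f c) a s).toReal - (genVar (dw f c) a s).toReal) -
      ((genVar (uw f c) a u).toReal - (genVar (dw f c) a u).toReal)) - (f s - f u) := by
      ring
    rw [heq]
    exact h
  refine ⟨part1, ?_⟩
  rintro s ⟨has, hsb⟩
  open TVaux in
  set g : ℝ → ℝ := fun t => f a + (upTruncVar f a t c).toReal -
    (downTruncVar f a t c).toReal with hg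
  open TVaux in
  have hgdiff : ∀ p q : ℝ, g q - g p =
      ((genVar (uw f c) a q).toReal - (genVar (uw f c) a p).toReal) -
      ((genVar (dw f c) a q).toReal - (genVar (dw f c) a p).toReal) := by
    intro p q
    rw [hg]
    simp only [upTruncVar_eq, downTruncVar_eq]
    ring
  open TVaux in
  have hbnds : ∀ (n : ℕ) (τ : ℕ → ℝ), a ≤ τ 0 → (∀ i < n, τ i < τ (i+1)) → τ n ≤ s →
      ∀ j ≤ n, a ≤ τ j ∧ τ j ≤ s := by
    intro n τ h1 h2 h3 j hj
    constructor
    · rcases Nat.eq_zero_or_pos j with rfl | h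
      · exact h1
      · exact h1.trans (strictMono_of_lt h2 0 j h hj).le
    · rcases eq_or_lt_of_le hj with rfl | h
      · exact h3
      · exact (strictMono_of_lt h2 j n h le_rfl).le.trans h3
  open TVaux in
  rw [totalVar_eq, truncVar_eq]
  apply le_antisymm
  · -- TV(g) ≤ TV^c(f)
    refine iSup_le fun n => iSup_le fun τ => iSup_le fun h1 => iSup_le fun h2 =>
      iSup_le fun h3 => ?_
    have hmem := hbnds n τ h1 h2 h3
    have hstep : ∀ i < n, pw g 0 (τ i) (τ (i+1)) ≤
        ((genVar (uw f c) a (τ (i+1))).toReal - (genVar (uw f c) a (τ i)).toReal) +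
        ((genVar (dw f c) a (τ (i+1))).toReal - (genVar (dw f c) a (τ i)).toReal) := by
      intro i hi
      have hle : τ i ≤ τ (i+1) := (h2 i hi).le
      have hb1 : τ (i+1) ≤ b := (hmem (i+1) (by omega)).2.trans hsb
      have hU2 : genVar (uw f c) a (τ (i+1)) ≠ ⊤ := hUfin _ hb1
      have hD2 : genVar (dw f c) a (τ (i+1)) ≠ ⊤ := hDfin _ hb1
      have hUm : (genVar (uw f c) a (τ i)).toReal ≤ (genVar (uw f c) a (τ (i+1))).toReal :=
        ENNReal.toReal_mono hU2 (genVar_mono_right _ hle)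
      have hDm : (genVar (dw f c) a (τ i)).toReal ≤ (genVar (dw f c) a (τ (i+1))).toReal :=
        ENNReal.toReal_mono hD2 (genVar_mono_right _ hle)
      have hpw : pw g 0 (τ i) (τ (i+1)) = |g (τ (i+1)) - g (τ i)| := by
        rw [pw, sub_zero]
        exact max_eq_left (abs_nonneg _)
      rw [hpw, hgdiff (τ i) (τ (i+1))]
      rw [abs_le]
      constructor <;> linarith
    have hsum : ∑ i ∈ Finset.range n, pw g 0 (τ i) (τ (i+1)) ≤
        (genVar (uw f c) a s).toReal + (genVar (dw f c) a s).toReal := by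
      have hUs : genVar (uw f c) a s ≠ ⊤ := hUfin s hsb
      have hDs : genVar (dw f c) a s ≠ ⊤ := hDfin s hsb
      calc ∑ i ∈ Finset.range n, pw g 0 (τ i) (τ (i+1))
          ≤ ∑ i ∈ Finset.range n,
              (((genVar (uw f c) a (τ (i+1))).toReal - (genVar (uw f c) a (τ i)).toReal) +
              ((genVar (dw f c) a (τ (i+1))).toReal - (genVar (dw f c) a (τ i)).toReal)) :=
            Finset.sum_le_sum fun i hi => hstep i (Finset.mem_range.1 hi)
        _ = ((genVar (uw f c) a (τ n)).toReal - (genVar (uw f c) a (τ 0)).toReal) +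
            ((genVar (dw f c) a (τ n)).toReal - (genVar (dw f c) a (τ 0)).toReal) := by
            rw [Finset.sum_add_distrib,
              Finset.sum_range_sub (fun j => (genVar (uw f c) a (τ j)).toReal),
              Finset.sum_range_sub (fun j => (genVar (dw f c) a (τ j)).toReal)]
        _ ≤ (genVar (uw f c) a s).toReal + (genVar (dw f c) a s).toReal := by
            have e1 : (genVar (uw f c) a (τ n)).toReal ≤ (genVar (uw f c) a s).toReal :=
              ENNReal.toReal_mono hUs (genVar_mono_right _ h3)
            have e2 : (genVar (dw f c) a (τ n)).toReal ≤ (genVar (dw f c) a s).toReal :=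
              ENNReal.toReal_mono hDs (genVar_mono_right _ h3)
            have e3 : 0 ≤ (genVar (uw f c) a (τ 0)).toReal := ENNReal.toReal_nonneg
            have e4 : 0 ≤ (genVar (dw f c) a (τ 0)).toReal := ENNReal.toReal_nonneg
            linarith
    calc ∑ i ∈ Finset.range n, ENNReal.ofReal (pw g 0 (τ i) (τ (i + 1)))
        = ENNReal.ofReal (∑ i ∈ Finset.range n, pw g 0 (τ i) (τ (i + 1))) :=
          (ENNReal.ofReal_sum_of_nonneg fun i _ => pw_nonneg g 0 _ _).symm
      _ ≤ ENNReal.ofReal ((genVar (uw f c) a s).toReal + (genVar (dw f c) a s).toReal) :=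
          ENNReal.ofReal_le_ofReal hsum
      _ = genVar (uw f c) a s + genVar (dw f c) a s := by
          rw [ENNReal.ofReal_add ENNReal.toReal_nonneg ENNReal.toReal_nonneg,
            ENNReal.ofReal_toReal (hUfin s hsb), ENNReal.ofReal_toReal (hDfin s hsb)]
      _ ≤ genVar (pw f c) a s := UD_le_TV f hc
  · -- TV^c(f) ≤ TV(g)
    refine iSup_le fun n => iSup_le fun τ => iSup_le fun h1 => iSup_le fun h2 =>
      iSup_le fun h3 => ?_
    have hmem := hbnds n τ h1 h2 h3
    have hstep : ∀ i < n, pw f c (τ i) (τ (i+1)) ≤ pw g 0 (τ i) (τ (i+1)) := by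
      intro i hi
      have hle : τ i ≤ τ (i+1) := (h2 i hi).le
      have hclose := claim1 f hc hTV (u := τ i) (s := τ (i+1))
        (hmem i (by omega)).1 hle ((hmem (i+1) (by omega)).2.trans hsb)
      have hdg := hgdiff (τ i) (τ (i+1))
      have hpw : pw g 0 (τ i) (τ (i+1)) = |g (τ (i+1)) - g (τ i)| := by
        rw [pw, sub_zero]
        exact max_eq_left (abs_nonneg _)
      rw [hpw]
      rw [pw]
      apply max_le _ (abs_nonneg _)
      have htri : |f (τ (i+1)) - f (τ i)| - |g (τ (i+1)) - g (τ i)| ≤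
          |(g (τ (i+1)) - g (τ i)) - (f (τ (i+1)) - f (τ i))| := by
        have := abs_sub_abs_le_abs_sub (f (τ (i+1)) - f (τ i)) (g (τ (i+1)) - g (τ i))
        calc |f (τ (i+1)) - f (τ i)| - |g (τ (i+1)) - g (τ i)|
            ≤ |(f (τ (i+1)) - f (τ i)) - (g (τ (i+1)) - g (τ i))| := this
          _ = |(g (τ (i+1)) - g (τ i)) - (f (τ (i+1)) - f (τ i))| := abs_sub_comm _ _
      have habs : |(g (τ (i+1)) - g (τ i)) - (f (τ (i+1)) - f (τ i))| ≤ c := by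
        rw [hdg]
        rw [show (genVar (uw f c) a (τ (i + 1))).toReal - (genVar (uw f c) a (τ i)).toReal -
          ((genVar (dw f c) a (τ (i + 1))).toReal - (genVar (dw f c) a (τ i)).toReal) -
          (f (τ (i + 1)) - f (τ i)) =
          (genVar (uw f c) a (τ (i + 1))).toReal - (genVar (dw f c) a (τ (i + 1))).toReal -
          ((genVar (uw f c) a (τ i)).toReal - (genVar (dw f c) a (τ i)).toReal) -
          (f (τ (i + 1)) - f (τ i)) from by ring]
        exact hclose
      linarith
    calc ∑ i ∈ Finset.range n, ENNReal.ofReal (pw f c (τ i) (τ (i + 1)))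
        ≤ ∑ i ∈ Finset.range n, ENNReal.ofReal (pw g 0 (τ i) (τ (i + 1))) :=
          Finset.sum_le_sum fun i hi =>
            ENNReal.ofReal_le_ofReal (hstep i (Finset.mem_range.1 hi))
      _ ≤ genVar (pw g 0) a s := sum_le_genVar (pw g 0) n τ h1 h2 h3
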